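/- Fix M ∈ ℕ, times t_0 < t_1 < ⋯ < t_M in [0,T], constants w_min < w_max, q_min ≤ q_max, an integer d_a ≥ 1, an initial value w_0 ∈ [w_min, w_max], and ℝ^{d_a}-valued random vectors Y_1, …, Y_M on a probability space. Let U_q : [0,T] × ℝ × ℝ → ℝ be continuous on [0,T] × [w_min, w_max] × [q_min, q_max], and let U_p : [0,T] × ℝ × ℝ^{d_a} × ℝ^{d_a} → ℝ be continuous on [0,T] × [w_min, w_max] × Z_p × { y : ‖y‖ ≤ r } for every r > 0. Let (q*, p*) and, for each n ∈ ℕ, (q_n, p_n) be Borel measurable policies on [0,T] × ℝ with q-values in Z_q(w) and p-values in Z_p pointwise. For any policy (q, p), define the controlled state sequence by W(t_0^-) = w_0, W(t_m^+) = U_q(t_m, W(t_m^-), q(t_m^-, W(t_m^-))) for m = 0,…,M, and W(t_{m+1}^-) = U_p(t_m, W(t_m^+), p(t_m^+, W(t_m^+)), Y_{m+1}) for m = 0,…,M−1; write W* for the state sequence under (q*, p*) and W^{(n)} for the state sequence under (q_n, p_n). Assume: (i) all states W*(t_m^±) and W^{(n)}(t_m^±) lie in [w_min, w_max] almost surely;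 (ii) for each m ∈ {0,…,M} and every sequence of random variables (V_n) with values in [w_min, w_max] a.s. and V_n → W*(t_m^-) in probability, one has q_n(t_m^-, V_n) → q*(t_m^-, W*(t_m^-)) in probability; (iii) for each m ∈ {0,…,M−1} and every sequence of random variables (V_n) with values in [w_min, w_max] a.s. and V_n → W*(t_m^+) in probability, one has p_n(t_m^+, V_n) → p*(t_m^+, W*(t_m^+)) in probability. Then W^{(n)}(t_m^-) → W*(t_m^-) in probability for all m = 0,…,M and W^{(n)}(t_m^+) → W*(t_m^+) in probability for all m = 0,…,M (including the terminal post-decision state at t_M). -/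

import Mathlib

open Filter MeasureTheory

/-- The admissible pre-decision set `Z_q(w)`. -/
noncomputable def Zq (qmin qmax w : ℝ) : Set ℝ :=
  if qmax ≤ w then Set.Icc qmin qmax
  else if qmin < w then Set.Icc qmin w
  else {qmin}

/-- The probability simplex `Z_p ⊆ ℝ^{d_a}`. -/
def Zp (da : ℕ) : Set (Fin da → ℝ) :=
  {z | (∀ i, 0 ≤ z i) ∧ ∑ i, z i = 1}

/-- The pre-decision state sequence `W(t_m^-)` of the controlled recursion induced
by a two-step policy `(q, p)`: `W(t_0^-) = w_0`,
`W(t_m^+) = U_q (t_m, W(t_m^-), q (t_m^-, W(t_m^-)))` and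
`W(t_{m+1}^-) = U_p (t_m, W(t_m^+), p (t_m^+, W(t_m^+)), Y_{m+1})`. -/
def Wminus {Ω : Type*} (da : ℕ)
    (Uq : ℝ → ℝ → ℝ → ℝ)
    (Up : ℝ → ℝ → (Fin da → ℝ) → (Fin da → ℝ) → ℝ)
    (t : ℕ → ℝ) (Y : ℕ → Ω → (Fin da → ℝ)) (w0 : ℝ)
    (q : ℝ → ℝ → ℝ) (p : ℝ → ℝ → (Fin da → ℝ)) : ℕ → Ω → ℝ
  | 0, _ => w0
  | m + 1, ω =>
      let wm := Wminus da Uq Up t Y w0 q p m ω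
      let wp := Uq (t m) wm (q (t m) wm)
      Up (t m) wp (p (t m) wp) (Y (m + 1) ω)

/-- The post-decision state `W(t_m^+)` of the controlled recursion. -/
def Wplus {Ω : Type*} (da : ℕ)
    (Uq : ℝ → ℝ → ℝ → ℝ)
    (Up : ℝ → ℝ → (Fin da → ℝ) → (Fin da → ℝ) → ℝ)
    (t : ℕ → ℝ) (Y : ℕ → Ω → (Fin da → ℝ)) (w0 : ℝ)
    (q : ℝ → ℝ → ℝ) (p : ℝ → ℝ → (Fin da → ℝ)) (m : ℕ) (ω : Ω) : ℝ :=
  let wm := Wminus da Uq Up t Y w0 q p m ω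
  Uq (t m) wm (q (t m) wm)

lemma Wminus_succ {Ω : Type*} (da : ℕ)
    (Uq : ℝ → ℝ → ℝ → ℝ)
    (Up : ℝ → ℝ → (Fin da → ℝ) → (Fin da → ℝ) → ℝ)
    (t : ℕ → ℝ) (Y : ℕ → Ω → (Fin da → ℝ)) (w0 : ℝ)
    (q : ℝ → ℝ → ℝ) (p : ℝ → ℝ → (Fin da → ℝ)) (m : ℕ) (ω : Ω) :
    Wminus da Uq Up t Y w0 q p (m + 1) ω =
      Up (t m) (Wplus da Uq Up t Y w0 q p m ω)
        (p (t m) (Wplus da Uq Up t Y w0 q p m ω)) (Y (m + 1) ω) := rfl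

lemma Wplus_def {Ω : Type*} (da : ℕ)
    (Uq : ℝ → ℝ → ℝ → ℝ)
    (Up : ℝ → ℝ → (Fin da → ℝ) → (Fin da → ℝ) → ℝ)
    (t : ℕ → ℝ) (Y : ℕ → Ω → (Fin da → ℝ)) (w0 : ℝ)
    (q : ℝ → ℝ → ℝ) (p : ℝ → ℝ → (Fin da → ℝ)) (m : ℕ) (ω : Ω) :
    Wplus da Uq Up t Y w0 q p m ω =
      Uq (t m) (Wminus da Uq Up t Y w0 q p m ω)
        (q (t m) (Wminus da Uq Up t Y w0 q p m ω)) := rfl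

lemma Zp_isCompact (da : ℕ) : IsCompact (Zp da) := by
  have hclosed : IsClosed (Zp da) := by
    have : Zp da = (⋂ i, {z : Fin da → ℝ | 0 ≤ z i}) ∩ {z | ∑ i, z i = 1} := by
      ext z; simp [Zp, Set.mem_iInter]
    rw [this]
    exact IsClosed.inter
      (isClosed_iInter fun i => isClosed_le continuous_const (continuous_apply i))
      (isClosed_eq (continuous_finset_sum _ fun i _ => continuous_apply i) continuous_const)
  refine Metric.isCompact_of_isClosed_isBounded hclosed ?_
  refine (Metric.isBounded_closedBall (x := (0 : Fin da → ℝ)) (r := 1)).subset ?_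
  intro z hz
  simp only [Metric.mem_closedBall, dist_zero_right]
  refine pi_norm_le_iff_of_nonneg zero_le_one |>.2 fun i => ?_
  rw [Real.norm_eq_abs, abs_le]
  constructor
  · linarith [hz.1 i]
  · have := Finset.single_le_sum (f := z) (fun j _ => hz.1 j) (Finset.mem_univ i)
    rw [hz.2] at this; exact this

lemma Zp_isClosed (da : ℕ) : IsClosed (Zp da) := (Zp_isCompact da).isClosed

lemma Zq_subset {qmin qmax : ℝ} (hq : qmin ≤ qmax) (w : ℝ) :
    Zq qmin qmax w ⊆ Set.Icc qmin qmax := by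
  intro x hx
  unfold Zq at hx
  split_ifs at hx with h1 h2
  · exact hx
  · exact ⟨hx.1, hx.2.trans (le_of_not_ge h1)⟩
  · rw [Set.mem_singleton_iff] at hx
    subst hx; exact ⟨le_refl _, hq⟩

theorem controlled_state_convergence
    {Ω : Type*} [MeasurableSpace Ω] (P : Measure Ω) [IsProbabilityMeasure P]
    (M : ℕ) (T : ℝ) (hT : 0 < T)
    (t : ℕ → ℝ)
    (ht_mono : ∀ m, m < M → t m < t (m + 1))
    (ht_mem : ∀ m, m ≤ M → t m ∈ Set.Icc 0 T)
    (wmin wmax : ℝ) (hw : wmin < wmax)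
    (qmin qmax : ℝ) (hq : qmin ≤ qmax)
    (da : ℕ) (hda : 1 ≤ da)
    (w0 : ℝ) (hw0 : w0 ∈ Set.Icc wmin wmax)
    (Y : ℕ → Ω → (Fin da → ℝ)) (hY : ∀ m, Measurable (Y m))
    (Uq : ℝ → ℝ → ℝ → ℝ)
    (hUq : ContinuousOn (fun x : ℝ × ℝ × ℝ => Uq x.1 x.2.1 x.2.2)
      (Set.Icc 0 T ×ˢ Set.Icc wmin wmax ×ˢ Set.Icc qmin qmax))
    (Up : ℝ → ℝ → (Fin da → ℝ) → (Fin da → ℝ) → ℝ)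
    (hUp : ∀ r : ℝ, 0 < r →
      ContinuousOn (fun x : ℝ × ℝ × (Fin da → ℝ) × (Fin da → ℝ) =>
          Up x.1 x.2.1 x.2.2.1 x.2.2.2)
        (Set.Icc 0 T ×ˢ Set.Icc wmin wmax ×ˢ Zp da ×ˢ Metric.closedBall 0 r))
    (qstar : ℝ → ℝ → ℝ) (pstar : ℝ → ℝ → (Fin da → ℝ))
    (hqstar_meas : Measurable (fun x : ℝ × ℝ => qstar x.1 x.2))
    (hpstar_meas : Measurable (fun x : ℝ × ℝ => pstar x.1 x.2))
    (hqstar_mem : ∀ s w : ℝ, s ∈ Set.Icc 0 T → qstar s w ∈ Zq qmin qmax w)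
    (hpstar_mem : ∀ s w : ℝ, s ∈ Set.Icc 0 T → pstar s w ∈ Zp da)
    (qn : ℕ → ℝ → ℝ → ℝ) (pn : ℕ → ℝ → ℝ → (Fin da → ℝ))
    (hqn_meas : ∀ n, Measurable (fun x : ℝ × ℝ => qn n x.1 x.2))
    (hpn_meas : ∀ n, Measurable (fun x : ℝ × ℝ => pn n x.1 x.2))
    (hqn_mem : ∀ n, ∀ s w : ℝ, s ∈ Set.Icc 0 T → qn n s w ∈ Zq qmin qmax w)
    (hpn_mem : ∀ n, ∀ s w : ℝ, s ∈ Set.Icc 0 T → pn n s w ∈ Zp da)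
    -- (i) bounded state
    (hWstar_bdd : ∀ m, m ≤ M → (∀ᵐ ω ∂P,
      Wminus da Uq Up t Y w0 qstar pstar m ω ∈ Set.Icc wmin wmax ∧
      Wplus da Uq Up t Y w0 qstar pstar m ω ∈ Set.Icc wmin wmax))
    (hWn_bdd : ∀ n, ∀ m, m ≤ M → (∀ᵐ ω ∂P,
      Wminus da Uq Up t Y w0 (qn n) (pn n) m ω ∈ Set.Icc wmin wmax ∧
      Wplus da Uq Up t Y w0 (qn n) (pn n) m ω ∈ Set.Icc wmin wmax))
    -- (ii) stability of the pre-decision actions at moving inputs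
    (hq_stable : ∀ m, m ≤ M → ∀ V : ℕ → Ω → ℝ,
      (∀ n, Measurable (V n)) →
      (∀ n, ∀ᵐ ω ∂P, V n ω ∈ Set.Icc wmin wmax) →
      (∀ ε : ℝ, 0 < ε →
        Tendsto (fun n =>
            P {ω | ε < |V n ω - Wminus da Uq Up t Y w0 qstar pstar m ω|})
          atTop (nhds 0)) →
      (∀ ε : ℝ, 0 < ε →
        Tendsto (fun n =>
            P {ω | ε < |qn n (t m) (V n ω) -
              qstar (t m) (Wminus da Uq Up t Y w0 qstar pstar m ω)|})
          atTop (nhds 0)))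
    -- (iii) stability of the post-decision actions at moving inputs
    (hp_stable : ∀ m, m < M → ∀ V : ℕ → Ω → ℝ,
      (∀ n, Measurable (V n)) →
      (∀ n, ∀ᵐ ω ∂P, V n ω ∈ Set.Icc wmin wmax) →
      (∀ ε : ℝ, 0 < ε →
        Tendsto (fun n =>
            P {ω | ε < |V n ω - Wplus da Uq Up t Y w0 qstar pstar m ω|})
          atTop (nhds 0)) →
      (∀ ε : ℝ, 0 < ε →
        Tendsto (fun n =>
            P {ω | ε < ‖pn n (t m) (V n ω) -
              pstar (t m) (Wplus da Uq Up t Y w0 qstar pstar m ω)‖})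
          atTop (nhds 0))) :
    ∀ m, m ≤ M →
      (∀ ε : ℝ, 0 < ε →
        Tendsto (fun n =>
            P {ω | ε < |Wminus da Uq Up t Y w0 (qn n) (pn n) m ω -
              Wminus da Uq Up t Y w0 qstar pstar m ω|})
          atTop (nhds 0)) ∧
      (∀ ε : ℝ, 0 < ε →
        Tendsto (fun n =>
            P {ω | ε < |Wplus da Uq Up t Y w0 (qn n) (pn n) m ω -
              Wplus da Uq Up t Y w0 qstar pstar m ω|})
          atTop (nhds 0)) := by
  have hwle : wmin ≤ wmax := hw.le
  set I : Set ℝ := Set.Icc wmin wmax with hIdef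
  set Ts : Set ℝ := Set.Icc 0 T with hTsdef
  set Qs : Set ℝ := Set.Icc qmin qmax with hQsdef
  -- the clamp function
  set clamp : ℝ → ℝ := fun w => min (max w wmin) wmax with hclampdef
  have hclamp_mem : ∀ w, clamp w ∈ I := fun w =>
    ⟨le_min (le_max_right _ _) hwle, min_le_right _ _⟩
  have hclamp_id : ∀ w, w ∈ I → clamp w = w := by
    intro w hw'
    simp only [hclampdef]
    rw [max_eq_left hw'.1, min_eq_left hw'.2]
  have hclamp_meas : Measurable clamp :=
    ((continuous_id.max continuous_const).min continuous_const).measurable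
  -- compactness facts
  have hK : IsCompact (Ts ×ˢ I ×ˢ Qs) :=
    isCompact_Icc.prod (isCompact_Icc.prod isCompact_Icc)
  have hZp_cpt : IsCompact (Zp da) := Zp_isCompact da
  -- Up is continuous on the unbounded-in-y domain
  set S : Set (ℝ × ℝ × (Fin da → ℝ) × (Fin da → ℝ)) := Ts ×ˢ I ×ˢ Zp da ×ˢ Set.univ
    with hSdef
  have hUpS : ContinuousOn (fun x : ℝ × ℝ × (Fin da → ℝ) × (Fin da → ℝ) =>
      Up x.1 x.2.1 x.2.2.1 x.2.2.2) S := by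
    intro x hx
    have hr : (0 : ℝ) < ‖x.2.2.2‖ + 1 := by positivity
    have hx' : x ∈ Ts ×ˢ I ×ˢ Zp da ×ˢ Metric.closedBall 0 (‖x.2.2.2‖ + 1) :=
      ⟨hx.1, hx.2.1, hx.2.2.1, by
        simp only [Metric.mem_closedBall, dist_zero_right]; linarith⟩
    have hc := hUp _ hr x hx'
    refine hc.mono_of_mem_nhdsWithin ?_
    rw [mem_nhdsWithin]
    refine ⟨{y : ℝ × ℝ × (Fin da → ℝ) × (Fin da → ℝ) | ‖y.2.2.2‖ < ‖x.2.2.2‖ + 1},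
      ?_, by simp, ?_⟩
    · exact isOpen_lt (continuous_norm.comp
        (continuous_snd.comp (continuous_snd.comp continuous_snd))) continuous_const
    · rintro y ⟨hy1, hy2⟩
      exact ⟨hy2.1, hy2.2.1, hy2.2.2.1, by
        simp only [Metric.mem_closedBall, dist_zero_right]; exact hy1.le⟩
  -- measurability of the clamped one-step maps
  have hFq : ∀ m, m ≤ M → ∀ q : ℝ → ℝ → ℝ,
      Measurable (fun x : ℝ × ℝ => q x.1 x.2) →
      (∀ s w : ℝ, s ∈ Set.Icc 0 T → q s w ∈ Zq qmin qmax w) →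
      Measurable (fun w : ℝ => Uq (t m) (clamp w) (q (t m) (clamp w))) := by
    intro m hm q hqm hqmem
    have hmemK : ∀ w : ℝ, ((t m, clamp w, q (t m) (clamp w)) : ℝ × ℝ × ℝ) ∈
        Ts ×ˢ I ×ˢ Qs :=
      fun w => ⟨ht_mem m hm, hclamp_mem w,
        Zq_subset hq _ (hqmem _ _ (ht_mem m hm))⟩
    have hφ : Measurable (fun w : ℝ =>
        (⟨(t m, clamp w, q (t m) (clamp w)), hmemK w⟩ :
          (Ts ×ˢ I ×ˢ Qs : Set (ℝ × ℝ × ℝ)))) := by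
      refine Measurable.subtype_mk ?_
      exact measurable_const.prodMk (hclamp_meas.prodMk
        (hqm.comp (measurable_const.prodMk hclamp_meas)))
    exact (hUq.restrict.measurable).comp hφ
  have hFp : ∀ m, m ≤ M → ∀ p : ℝ → ℝ → (Fin da → ℝ),
      Measurable (fun x : ℝ × ℝ => p x.1 x.2) →
      (∀ s w : ℝ, s ∈ Set.Icc 0 T → p s w ∈ Zp da) →
      Measurable (fun x : ℝ × (Fin da → ℝ) =>
        Up (t m) (clamp x.1) (p (t m) (clamp x.1)) x.2) := by
    intro m hm p hpm hpmem
    have hmemS : ∀ x : ℝ × (Fin da → ℝ),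
        ((t m, clamp x.1, p (t m) (clamp x.1), x.2) :
          ℝ × ℝ × (Fin da → ℝ) × (Fin da → ℝ)) ∈ S :=
      fun x => ⟨ht_mem m hm, hclamp_mem x.1, hpmem _ _ (ht_mem m hm), trivial⟩
    have hφ : Measurable (fun x : ℝ × (Fin da → ℝ) =>
        (⟨(t m, clamp x.1, p (t m) (clamp x.1), x.2), hmemS x⟩ : S)) := by
      refine Measurable.subtype_mk ?_
      exact measurable_const.prodMk
        (((hclamp_meas.comp measurable_fst)).prodMk
          ((hpm.comp (measurable_const.prodMk (hclamp_meas.comp measurable_fst))).prodMk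
            measurable_snd))
    exact (hUpS.restrict.measurable).comp hφ
  -- a.e. measurability of the state sequences
  have haemeas : ∀ (q : ℝ → ℝ → ℝ) (p : ℝ → ℝ → (Fin da → ℝ)),
      Measurable (fun x : ℝ × ℝ => q x.1 x.2) →
      Measurable (fun x : ℝ × ℝ => p x.1 x.2) →
      (∀ s w : ℝ, s ∈ Set.Icc 0 T → q s w ∈ Zq qmin qmax w) →
      (∀ s w : ℝ, s ∈ Set.Icc 0 T → p s w ∈ Zp da) →
      (∀ m, m ≤ M → (∀ᵐ ω ∂P,
        Wminus da Uq Up t Y w0 q p m ω ∈ Set.Icc wmin wmax ∧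
        Wplus da Uq Up t Y w0 q p m ω ∈ Set.Icc wmin wmax)) →
      ∀ m, m ≤ M → AEMeasurable (Wminus da Uq Up t Y w0 q p m) P ∧
        AEMeasurable (Wplus da Uq Up t Y w0 q p m) P := by
    intro q p hqm hpm hqmem hpmem hbdd
    have hplus : ∀ m, m ≤ M → AEMeasurable (Wminus da Uq Up t Y w0 q p m) P →
        AEMeasurable (Wplus da Uq Up t Y w0 q p m) P := by
      intro m hm haem
      have h1 := hFq m hm q hqm hqmem
      refine AEMeasurable.congr (h1.comp_aemeasurable haem) ?_
      filter_upwards [hbdd m hm] with ω hω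
      show Uq (t m) (clamp (Wminus da Uq Up t Y w0 q p m ω)) _ = _
      rw [hclamp_id _ hω.1, Wplus_def]
    intro m
    induction m with
    | zero =>
      intro h0
      have h1 : AEMeasurable (Wminus da Uq Up t Y w0 q p 0) P := aemeasurable_const
      exact ⟨h1, hplus 0 h0 h1⟩
    | succ k ih =>
      intro hk
      have hkM : k ≤ M := (Nat.le_succ k).trans hk
      obtain ⟨hkm, hkp⟩ := ih hkM
      have h1 := hFp k hkM p hpm hpmem
      have hpair : AEMeasurable
          (fun ω => ((Wplus da Uq Up t Y w0 q p k ω, Y (k + 1) ω) :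
            ℝ × (Fin da → ℝ))) P := hkp.prodMk (hY (k + 1)).aemeasurable
      have hminus : AEMeasurable (Wminus da Uq Up t Y w0 q p (k + 1)) P := by
        refine AEMeasurable.congr (h1.comp_aemeasurable hpair) ?_
        filter_upwards [hbdd k hkM] with ω hω
        show Up (t k) (clamp (Wplus da Uq Up t Y w0 q p k ω)) _ _ = _
        rw [hclamp_id _ hω.2, Wminus_succ]
      exact ⟨hminus, hplus (k + 1) hk hminus⟩
  -- abbreviations for the state sequences
  set Wm : ℕ → ℕ → Ω → ℝ := fun n => Wminus da Uq Up t Y w0 (qn n) (pn n) with hWmdef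
  set Wp : ℕ → ℕ → Ω → ℝ := fun n => Wplus da Uq Up t Y w0 (qn n) (pn n) with hWpdef
  set Wms : ℕ → Ω → ℝ := Wminus da Uq Up t Y w0 qstar pstar with hWmsdef
  set Wps : ℕ → Ω → ℝ := Wplus da Uq Up t Y w0 qstar pstar with hWpsdef
  have haen : ∀ n m, m ≤ M → AEMeasurable (Wm n m) P ∧ AEMeasurable (Wp n m) P :=
    fun n => haemeas (qn n) (pn n) (hqn_meas n) (hpn_meas n) (hqn_mem n)
      (hpn_mem n) (hWn_bdd n)
  -- step 1 : convergence of pre-decision states implies convergence of post-decision states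
  have step1 : ∀ m, m ≤ M →
      (∀ ε : ℝ, 0 < ε →
        Tendsto (fun n => P {ω | ε < |Wm n m ω - Wms m ω|}) atTop (nhds 0)) →
      (∀ ε : ℝ, 0 < ε →
        Tendsto (fun n => P {ω | ε < |Wp n m ω - Wps m ω|}) atTop (nhds 0)) := by
    intro m hm hcm ε hε
    have hUC := hK.uniformContinuousOn_of_continuous hUq
    rw [Metric.uniformContinuousOn_iff] at hUC
    obtain ⟨δ, hδ, hUCd⟩ := hUC ε hε
    have hδ2 : 0 < δ / 2 := half_pos hδ
    -- measurable versions
    set V : ℕ → Ω → ℝ := fun n => (haen n m hm).1.mk _ with hVdef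
    have hVm : ∀ n, Measurable (V n) := fun n => (haen n m hm).1.measurable_mk
    have hVeq : ∀ n, Wm n m =ᵐ[P] V n := fun n => (haen n m hm).1.ae_eq_mk
    have hVmem : ∀ n, ∀ᵐ ω ∂P, V n ω ∈ Set.Icc wmin wmax := by
      intro n
      filter_upwards [hVeq n, hWn_bdd n m hm] with ω h1 h2
      rw [← h1]; exact h2.1
    have hVconv : ∀ ε' : ℝ, 0 < ε' →
        Tendsto (fun n => P {ω | ε' < |V n ω - Wms m ω|}) atTop (nhds 0) := by
      intro ε' hε'
      refine tendsto_of_tendsto_of_tendsto_of_le_of_le tendsto_const_nhds (hcm ε' hε')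
        (fun n => zero_le) (fun n => ?_)
      refine measure_mono_ae ?_
      filter_upwards [hVeq n] with ω hω h
      show ε' < |Wm n m ω - Wms m ω|
      rw [hω]
      exact h
    have hqconv := hq_stable m hm V hVm hVmem hVconv
    -- null sets
    have hnull : ∀ n, P {ω | ¬ (Wm n m ω ∈ I ∧ Wms m ω ∈ I ∧ Wm n m ω = V n ω)} = 0 := by
      intro n
      rw [← ae_iff]
      filter_upwards [hWn_bdd n m hm, hWstar_bdd m hm, hVeq n] with ω h1 h2 h3
      exact ⟨h1.1, h2.1, h3⟩
    have hsub : ∀ n, {ω | ε < |Wp n m ω - Wps m ω|} ⊆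
        {ω | δ / 2 < |Wm n m ω - Wms m ω|} ∪
        ({ω | δ / 2 < |qn n (t m) (V n ω) - qstar (t m) (Wms m ω)|} ∪
          {ω | ¬ (Wm n m ω ∈ I ∧ Wms m ω ∈ I ∧ Wm n m ω = V n ω)}) := by
      intro n ω hω
      by_contra hcon
      simp only [Set.mem_union, Set.mem_setOf_eq, not_or, not_lt, not_not] at hcon
      obtain ⟨hB, hC, hG1, hG2, hG3⟩ := hcon
      have hxK : ((t m, Wm n m ω, qn n (t m) (Wm n m ω)) : ℝ × ℝ × ℝ) ∈
          Ts ×ˢ I ×ˢ Qs :=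
        ⟨ht_mem m hm, hG1, Zq_subset hq _ (hqn_mem n _ _ (ht_mem m hm))⟩
      have hyK : ((t m, Wms m ω, qstar (t m) (Wms m ω)) : ℝ × ℝ × ℝ) ∈
          Ts ×ˢ I ×ˢ Qs :=
        ⟨ht_mem m hm, hG2, Zq_subset hq _ (hqstar_mem _ _ (ht_mem m hm))⟩
      have hdist : dist ((t m, Wm n m ω, qn n (t m) (Wm n m ω)) : ℝ × ℝ × ℝ)
          ((t m, Wms m ω, qstar (t m) (Wms m ω)) : ℝ × ℝ × ℝ) < δ := by
        have h1 : dist (Wm n m ω) (Wms m ω) ≤ δ / 2 := by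
          rw [Real.dist_eq]; exact hB
        have h2 : dist (qn n (t m) (Wm n m ω)) (qstar (t m) (Wms m ω)) ≤ δ / 2 := by
          rw [Real.dist_eq, hG3]; exact hC
        rw [Prod.dist_eq]
        refine max_lt (by simpa [dist_self] using hδ) ?_
        rw [Prod.dist_eq]
        exact max_lt (lt_of_le_of_lt h1 (half_lt_self hδ))
          (lt_of_le_of_lt h2 (half_lt_self hδ))
      have hclose := hUCd _ hxK _ hyK hdist
      rw [Real.dist_eq] at hclose
      have heq : (fun x : ℝ × ℝ × ℝ => Uq x.1 x.2.1 x.2.2)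
            ((t m, Wm n m ω, qn n (t m) (Wm n m ω)) : ℝ × ℝ × ℝ) -
          (fun x : ℝ × ℝ × ℝ => Uq x.1 x.2.1 x.2.2)
            ((t m, Wms m ω, qstar (t m) (Wms m ω)) : ℝ × ℝ × ℝ) =
          Wp n m ω - Wps m ω := rfl
      rw [heq] at hclose
      exact absurd hω (not_lt.2 hclose.le)
    have hBC : Tendsto (fun n =>
        P {ω | δ / 2 < |Wm n m ω - Wms m ω|} +
          P {ω | δ / 2 < |qn n (t m) (V n ω) - qstar (t m) (Wms m ω)|})
        atTop (nhds 0) := by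
      have := (hcm (δ / 2) hδ2).add (hqconv (δ / 2) hδ2)
      simpa using this
    refine tendsto_of_tendsto_of_tendsto_of_le_of_le tendsto_const_nhds hBC
      (fun n => zero_le) (fun n => ?_)
    calc P {ω | ε < |Wp n m ω - Wps m ω|}
        ≤ P ({ω | δ / 2 < |Wm n m ω - Wms m ω|} ∪
            ({ω | δ / 2 < |qn n (t m) (V n ω) - qstar (t m) (Wms m ω)|} ∪
              {ω | ¬ (Wm n m ω ∈ I ∧ Wms m ω ∈ I ∧ Wm n m ω = V n ω)})) :=
          measure_mono (hsub n)
      _ ≤ P {ω | δ / 2 < |Wm n m ω - Wms m ω|} +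
            P ({ω | δ / 2 < |qn n (t m) (V n ω) - qstar (t m) (Wms m ω)|} ∪
              {ω | ¬ (Wm n m ω ∈ I ∧ Wms m ω ∈ I ∧ Wm n m ω = V n ω)}) :=
          measure_union_le _ _
      _ ≤ P {ω | δ / 2 < |Wm n m ω - Wms m ω|} +
            (P {ω | δ / 2 < |qn n (t m) (V n ω) - qstar (t m) (Wms m ω)|} +
              P {ω | ¬ (Wm n m ω ∈ I ∧ Wms m ω ∈ I ∧ Wm n m ω = V n ω)}) :=
          add_le_add le_rfl (measure_union_le _ _)
      _ = P {ω | δ / 2 < |Wm n m ω - Wms m ω|} +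
            P {ω | δ / 2 < |qn n (t m) (V n ω) - qstar (t m) (Wms m ω)|} := by
          rw [hnull n, add_zero]
  -- step 2 : convergence of post-decision states implies convergence at the next time
  have step2 : ∀ m, m < M →
      (∀ ε : ℝ, 0 < ε →
        Tendsto (fun n => P {ω | ε < |Wp n m ω - Wps m ω|}) atTop (nhds 0)) →
      (∀ ε : ℝ, 0 < ε →
        Tendsto (fun n => P {ω | ε < |Wm n (m + 1) ω - Wms (m + 1) ω|})
          atTop (nhds 0)) := by
    intro m hmM hcp ε hε
    have hm : m ≤ M := hmM.le
    rw [ENNReal.tendsto_nhds_zero]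
    intro η hη
    set η' : ENNReal := min η 1 with hη'def
    have hη' : 0 < η' := lt_min hη zero_lt_one
    have hη'2 : (0 : ENNReal) < η' / 2 := ENNReal.div_pos hη'.ne' ENNReal.ofNat_ne_top
    -- tightness of Y (m+1)
    have htight : Tendsto (fun r : ℕ => P {ω | (r : ℝ) < ‖Y (m + 1) ω‖})
        atTop (nhds 0) := by
      have hmeas : ∀ r : ℕ, MeasurableSet {ω | (r : ℝ) < ‖Y (m + 1) ω‖} := fun r =>
        measurableSet_lt measurable_const (hY (m + 1)).norm
      have hanti : Antitone (fun r : ℕ => {ω | (r : ℝ) < ‖Y (m + 1) ω‖}) := by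
        intro a b hab ω hω
        have hω' : (b : ℝ) < ‖Y (m + 1) ω‖ := hω
        exact lt_of_le_of_lt (by exact_mod_cast hab) hω'
      have hint : (⋂ r : ℕ, {ω | (r : ℝ) < ‖Y (m + 1) ω‖}) = ∅ := by
        ext ω
        simp only [Set.mem_iInter, Set.mem_setOf_eq, Set.mem_empty_iff_false,
          iff_false, not_forall, not_lt]
        exact exists_nat_ge ‖Y (m + 1) ω‖
      have h := tendsto_measure_iInter_atTop
        (fun r => (hmeas r).nullMeasurableSet) hanti ⟨0, measure_ne_top P _⟩
      rw [hint] at h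
      simpa [Function.comp_def] using h
    obtain ⟨r0, hr0⟩ := ((ENNReal.tendsto_nhds_zero.1 htight) (η' / 2) hη'2).exists
    set r : ℝ := (r0 : ℝ) + 1 with hrdef
    have hr : 0 < r := by positivity
    have hYr : P {ω | r < ‖Y (m + 1) ω‖} ≤ η' / 2 := by
      refine le_trans (measure_mono ?_) hr0
      intro ω hω
      have hω' : r < ‖Y (m + 1) ω‖ := hω
      show (r0 : ℝ) < ‖Y (m + 1) ω‖
      refine lt_of_le_of_lt ?_ hω'
      simp only [hrdef]; linarith
    -- uniform continuity of Up on the compact domain with radius r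
    have hKr : IsCompact (Ts ×ˢ I ×ˢ Zp da ×ˢ Metric.closedBall (0 : Fin da → ℝ) r) :=
      isCompact_Icc.prod (isCompact_Icc.prod (hZp_cpt.prod (isCompact_closedBall _ _)))
    have hUC := hKr.uniformContinuousOn_of_continuous (hUp r hr)
    rw [Metric.uniformContinuousOn_iff] at hUC
    obtain ⟨δ, hδ, hUCd⟩ := hUC ε hε
    have hδ2 : 0 < δ / 2 := half_pos hδ
    -- measurable versions of the post-decision states
    set V : ℕ → Ω → ℝ := fun n => (haen n m hm).2.mk _ with hVdef
    have hVm : ∀ n, Measurable (V n) := fun n => (haen n m hm).2.measurable_mk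
    have hVeq : ∀ n, Wp n m =ᵐ[P] V n := fun n => (haen n m hm).2.ae_eq_mk
    have hVmem : ∀ n, ∀ᵐ ω ∂P, V n ω ∈ Set.Icc wmin wmax := by
      intro n
      filter_upwards [hVeq n, hWn_bdd n m hm] with ω h1 h2
      rw [← h1]; exact h2.2
    have hVconv : ∀ ε' : ℝ, 0 < ε' →
        Tendsto (fun n => P {ω | ε' < |V n ω - Wps m ω|}) atTop (nhds 0) := by
      intro ε' hε'
      refine tendsto_of_tendsto_of_tendsto_of_le_of_le tendsto_const_nhds (hcp ε' hε')
        (fun n => zero_le) (fun n => ?_)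
      refine measure_mono_ae ?_
      filter_upwards [hVeq n] with ω hω h
      show ε' < |Wp n m ω - Wps m ω|
      rw [hω]
      exact h
    have hpconv := hp_stable m hmM V hVm hVmem hVconv
    have hnull : ∀ n, P {ω | ¬ (Wp n m ω ∈ I ∧ Wps m ω ∈ I ∧ Wp n m ω = V n ω)} = 0 := by
      intro n
      rw [← ae_iff]
      filter_upwards [hWn_bdd n m hm, hWstar_bdd m hm, hVeq n] with ω h1 h2 h3
      exact ⟨h1.2, h2.2, h3⟩
    have hsub : ∀ n, {ω | ε < |Wm n (m + 1) ω - Wms (m + 1) ω|} ⊆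
        {ω | r < ‖Y (m + 1) ω‖} ∪
        ({ω | δ / 2 < |Wp n m ω - Wps m ω|} ∪
        ({ω | δ / 2 < ‖pn n (t m) (V n ω) - pstar (t m) (Wps m ω)‖} ∪
          {ω | ¬ (Wp n m ω ∈ I ∧ Wps m ω ∈ I ∧ Wp n m ω = V n ω)})) := by
      intro n ω hω
      by_contra hcon
      simp only [Set.mem_union, Set.mem_setOf_eq, not_or, not_lt, not_not] at hcon
      obtain ⟨hYb, hB, hC, hG1, hG2, hG3⟩ := hcon
      have hYball : Y (m + 1) ω ∈ Metric.closedBall (0 : Fin da → ℝ) r := by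
        simp only [Metric.mem_closedBall, dist_zero_right]; exact hYb
      have hxK : ((t m, Wp n m ω, pn n (t m) (Wp n m ω), Y (m + 1) ω) :
          ℝ × ℝ × (Fin da → ℝ) × (Fin da → ℝ)) ∈
          Ts ×ˢ I ×ˢ Zp da ×ˢ Metric.closedBall (0 : Fin da → ℝ) r :=
        ⟨ht_mem m hm, hG1, hpn_mem n _ _ (ht_mem m hm), hYball⟩
      have hyK : ((t m, Wps m ω, pstar (t m) (Wps m ω), Y (m + 1) ω) :
          ℝ × ℝ × (Fin da → ℝ) × (Fin da → ℝ)) ∈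
          Ts ×ˢ I ×ˢ Zp da ×ˢ Metric.closedBall (0 : Fin da → ℝ) r :=
        ⟨ht_mem m hm, hG2, hpstar_mem _ _ (ht_mem m hm), hYball⟩
      have hdist : dist ((t m, Wp n m ω, pn n (t m) (Wp n m ω), Y (m + 1) ω) :
          ℝ × ℝ × (Fin da → ℝ) × (Fin da → ℝ))
          ((t m, Wps m ω, pstar (t m) (Wps m ω), Y (m + 1) ω) :
          ℝ × ℝ × (Fin da → ℝ) × (Fin da → ℝ)) < δ := by
        have h1 : dist (Wp n m ω) (Wps m ω) ≤ δ / 2 := by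
          rw [Real.dist_eq]; exact hB
        have h2 : dist (pn n (t m) (Wp n m ω)) (pstar (t m) (Wps m ω)) ≤ δ / 2 := by
          rw [dist_eq_norm, hG3]; exact hC
        rw [Prod.dist_eq]
        refine max_lt (by simpa [dist_self] using hδ) ?_
        rw [Prod.dist_eq]
        refine max_lt (lt_of_le_of_lt h1 (half_lt_self hδ)) ?_
        rw [Prod.dist_eq]
        exact max_lt (lt_of_le_of_lt h2 (half_lt_self hδ))
          (by simpa [dist_self] using hδ)
      have hclose := hUCd _ hxK _ hyK hdist
      rw [Real.dist_eq] at hclose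
      have heq : (fun x : ℝ × ℝ × (Fin da → ℝ) × (Fin da → ℝ) =>
            Up x.1 x.2.1 x.2.2.1 x.2.2.2)
            ((t m, Wp n m ω, pn n (t m) (Wp n m ω), Y (m + 1) ω) :
              ℝ × ℝ × (Fin da → ℝ) × (Fin da → ℝ)) -
          (fun x : ℝ × ℝ × (Fin da → ℝ) × (Fin da → ℝ) =>
            Up x.1 x.2.1 x.2.2.1 x.2.2.2)
            ((t m, Wps m ω, pstar (t m) (Wps m ω), Y (m + 1) ω) :
              ℝ × ℝ × (Fin da → ℝ) × (Fin da → ℝ)) =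
          Wm n (m + 1) ω - Wms (m + 1) ω := rfl
      rw [heq] at hclose
      exact absurd hω (not_lt.2 hclose.le)
    have hBC : Tendsto (fun n =>
        P {ω | δ / 2 < |Wp n m ω - Wps m ω|} +
          P {ω | δ / 2 < ‖pn n (t m) (V n ω) - pstar (t m) (Wps m ω)‖})
        atTop (nhds 0) := by
      have := (hcp (δ / 2) hδ2).add (hpconv (δ / 2) hδ2)
      simpa using this
    have hev := (ENNReal.tendsto_nhds_zero.1 hBC) (η' / 2) hη'2
    filter_upwards [hev] with n hn
    calc P {ω | ε < |Wm n (m + 1) ω - Wms (m + 1) ω|}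
        ≤ P ({ω | r < ‖Y (m + 1) ω‖} ∪
            ({ω | δ / 2 < |Wp n m ω - Wps m ω|} ∪
            ({ω | δ / 2 < ‖pn n (t m) (V n ω) - pstar (t m) (Wps m ω)‖} ∪
              {ω | ¬ (Wp n m ω ∈ I ∧ Wps m ω ∈ I ∧ Wp n m ω = V n ω)}))) :=
          measure_mono (hsub n)
      _ ≤ P {ω | r < ‖Y (m + 1) ω‖} +
            P ({ω | δ / 2 < |Wp n m ω - Wps m ω|} ∪
            ({ω | δ / 2 < ‖pn n (t m) (V n ω) - pstar (t m) (Wps m ω)‖} ∪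
              {ω | ¬ (Wp n m ω ∈ I ∧ Wps m ω ∈ I ∧ Wp n m ω = V n ω)})) :=
          measure_union_le _ _
      _ ≤ P {ω | r < ‖Y (m + 1) ω‖} +
            (P {ω | δ / 2 < |Wp n m ω - Wps m ω|} +
            P ({ω | δ / 2 < ‖pn n (t m) (V n ω) - pstar (t m) (Wps m ω)‖} ∪
              {ω | ¬ (Wp n m ω ∈ I ∧ Wps m ω ∈ I ∧ Wp n m ω = V n ω)})) :=
          add_le_add le_rfl (measure_union_le _ _)
      _ ≤ P {ω | r < ‖Y (m + 1) ω‖} +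
            (P {ω | δ / 2 < |Wp n m ω - Wps m ω|} +
            (P {ω | δ / 2 < ‖pn n (t m) (V n ω) - pstar (t m) (Wps m ω)‖} +
              P {ω | ¬ (Wp n m ω ∈ I ∧ Wps m ω ∈ I ∧ Wp n m ω = V n ω)})) :=
          add_le_add le_rfl (add_le_add le_rfl (measure_union_le _ _))
      _ = P {ω | r < ‖Y (m + 1) ω‖} +
            (P {ω | δ / 2 < |Wp n m ω - Wps m ω|} +
            P {ω | δ / 2 < ‖pn n (t m) (V n ω) - pstar (t m) (Wps m ω)‖}) := by
          rw [hnull n, add_zero]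
      _ ≤ η' / 2 + η' / 2 := add_le_add hYr hn
      _ = η' := ENNReal.add_halves _
      _ ≤ η := min_le_left _ _
  -- base case
  have base : ∀ ε : ℝ, 0 < ε →
      Tendsto (fun n => P {ω | ε < |Wm n 0 ω - Wms 0 ω|}) atTop (nhds 0) := by
    intro ε hε
    have hempty : ∀ n, {ω | ε < |Wm n 0 ω - Wms 0 ω|} = (∅ : Set Ω) := by
      intro n
      ext ω
      constructor
      · intro hω
        have h0 : Wm n 0 ω - Wms 0 ω = 0 := sub_self w0
        rw [Set.mem_setOf_eq, h0, abs_zero] at hω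
        exact absurd hω (not_lt.2 hε.le)
      · intro hω
        exact absurd hω (Set.notMem_empty ω)
    have hconst : (fun n => P {ω | ε < |Wm n 0 ω - Wms 0 ω|}) = fun _ => 0 := by
      funext n
      rw [hempty n, measure_empty]
    rw [hconst]
    exact tendsto_const_nhds
  -- induction
  intro m
  induction m with
  | zero =>
    intro h0
    exact ⟨base, step1 0 h0 base⟩
  | succ k ih =>
    intro hk
    have hkM : k < M := hk
    obtain ⟨ihm, ihp⟩ := ih hkM.le
    have hminus := step2 k hkM ihp
    exact ⟨hminus, step1 (k + 1) hk hminus⟩
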